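/- Let u be a classical solution of the n-vortex equation with finite energy. Then the integrals ∫₀^R r u'(r)² dr, ∫₀^R (n²/r) u(r)² dr, ∫₀^R r u(r)² dr and ∫₀^R r u(r)⁴/(1 + α u(r)²) dr are all finite, and the identity −∫₀^R r u'(r)² dr = ∫₀^R [ (n²/r) u(r)² + 2κ r u(r)² − 2 r u(r)⁴/(1 + α u(r)²) ] dr holds. -/

import Mathlib

open MeasureTheory Set Filter Topology

noncomputable section

/-- The Bessel function `J₀`. -/
def besselJ0 (x : ℝ) : ℝ :=
  ∑' m : ℕ, (-1 : ℝ) ^ m * (x / 2) ^ (2 * m) / ((Nat.factorial m : ℝ)) ^ 2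

/-- The smallest positive zero of `J₀` (≈ 2.404826). -/
def besselR0 : ℝ := sInf {x : ℝ | 0 < x ∧ besselJ0 x = 0}

/-- `u` is a classical solution of the `n`-vortex equation with parameters `(α, n, κ, R)`. -/
def IsVortexSol (α : ℝ) (n : ℤ) (κ R : ℝ) (u : ℝ → ℝ) : Prop :=
  ContinuousOn u (Icc 0 R) ∧
  (∀ r ∈ Ioo (0 : ℝ) R, DifferentiableAt ℝ u r ∧ DifferentiableAt ℝ (deriv u) r) ∧
  u 0 = 0 ∧ u R = 0 ∧
  ∀ r ∈ Ioo (0 : ℝ) R,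
    deriv (fun s => s * deriv u s) r - ((n : ℝ) ^ 2 / r) * u r
      + 2 * r * (u r) ^ 3 / (1 + α * (u r) ^ 2) - 2 * κ * r * u r = 0

/-- `u` has finite energy. -/
def FiniteEnergy (α R : ℝ) (u : ℝ → ℝ) : Prop :=
  IntegrableOn
    (fun r => r * (deriv u r) ^ 2 + (u r) ^ 2 / r + r * Real.log (1 + α * (u r) ^ 2))
    (Ioo 0 R)

/-- The energy flux `Q(u) = 2π ∫₀^R r u(r)² dr`. -/
def fluxQ (R : ℝ) (u : ℝ → ℝ) : ℝ := 2 * Real.pi * ∫ r in Ioo (0 : ℝ) R, r * (u r) ^ 2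

/-- The tent function with parameters `a` and `b`. -/
def tent (a b : ℝ) : ℝ → ℝ := fun r => if r ≤ a then (b / a) * r else (b / a) * (2 * a - r)

/-- The action functional `I_κ`. -/
def actI (α : ℝ) (n : ℤ) (κ R : ℝ) (u : ℝ → ℝ) : ℝ :=
  (1 / 2) * ∫ r in Ioo (0 : ℝ) R,
    (r * (deriv u r) ^ 2 + ((n : ℝ) ^ 2 / r) * (u r) ^ 2
      - 2 * (α⁻¹ - κ) * r * (u r) ^ 2 + 2 * (α ^ 2)⁻¹ * r * Real.log (1 + α * (u r) ^ 2))

/-- The action functional `𝓘`. -/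
def actI0 (α : ℝ) (n : ℤ) (R : ℝ) (u : ℝ → ℝ) : ℝ :=
  (1 / 2) * ∫ r in Ioo (0 : ℝ) R,
    (r * (deriv u r) ^ 2 + ((n : ℝ) ^ 2 / r) * (u r) ^ 2
      - 2 * α⁻¹ * r * (u r) ^ 2 + 2 * (α ^ 2)⁻¹ * r * Real.log (1 + α * (u r) ^ 2))

/-- The functional `γ_κ`. -/
def gammaK (α : ℝ) (n : ℤ) (κ R : ℝ) (u : ℝ → ℝ) : ℝ :=
  (1 / 2) * ∫ r in Ioo (0 : ℝ) R,
    (r * (deriv u r) ^ 2 + ((n : ℝ) ^ 2 / r) * (u r) ^ 2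
      - 2 * (α⁻¹ - κ) * r * (u r) ^ 2 + 2 * α⁻¹ * r * (u r) ^ 2 / (1 + α * (u r) ^ 2))

/-- Membership in the class `X`. -/
def MemX (R : ℝ) (u : ℝ → ℝ) : Prop :=
  ContinuousOn u (Icc 0 R) ∧ ContDiffOn ℝ 1 u (Ioo 0 R) ∧ u 0 = 0 ∧ u R = 0 ∧
    IntegrableOn (fun r => r * (deriv u r) ^ 2 + (u r) ^ 2 / r) (Ioo 0 R)

/-- Membership in the class `X`, allowing finitely many exceptional points. -/
def MemX' (R : ℝ) (u : ℝ → ℝ) : Prop :=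
  ContinuousOn u (Icc 0 R) ∧ (∃ S : Finset ℝ, ContDiffOn ℝ 1 u (Ioo 0 R \ ↑S)) ∧
    u 0 = 0 ∧ u R = 0 ∧
    IntegrableOn (fun r => r * (deriv u r) ^ 2 + (u r) ^ 2 / r) (Ioo 0 R)

/-- The admissible class `𝒜`. -/
def Admissible (α R : ℝ) (v : ℝ → ℝ) : Prop :=
  (∃ K : NNReal, LipschitzOnWith K v (Icc 0 R)) ∧ v 0 = 0 ∧ v R = 0 ∧ FiniteEnergy α R v

end

/-- `(x - b)⁻¹` is not integrable on `Ioo a b`. -/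
private lemma not_int_right {a b : ℝ} (hab : a < b) :
    ¬ IntegrableOn (fun x : ℝ => (x - b)⁻¹) (Ioo a b) := by
  intro h
  have h2 : IntervalIntegrable (fun x : ℝ => (x - b)⁻¹) volume a b :=
    (intervalIntegrable_iff_integrableOn_Ioo_of_le hab.le).2 h
  rcases intervalIntegrable_sub_inv_iff.1 h2 with h3 | h3
  · exact hab.ne h3
  · exact h3 (by simp [uIcc_of_le hab.le, hab.le])

/-- `(x - a)⁻¹` is not integrable on `Ioo a b`. -/
private lemma not_int_left {a b : ℝ} (hab : a < b) :
    ¬ IntegrableOn (fun x : ℝ => (x - a)⁻¹) (Ioo a b) := by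
  intro h
  have h2 : IntervalIntegrable (fun x : ℝ => (x - a)⁻¹) volume a b :=
    (intervalIntegrable_iff_integrableOn_Ioo_of_le hab.le).2 h
  rcases intervalIntegrable_sub_inv_iff.1 h2 with h3 | h3
  · exact hab.ne h3
  · exact h3 (by simp [uIcc_of_le hab.le, hab.le])

private lemma exists_right {g : ℝ → ℝ} {a b : ℝ} (hab : a < b)
    (hg : IntegrableOn g (Ioo a b)) (c δ : ℝ) (hc : 0 < c) (hδ : 0 < δ) :
    ∃ t ∈ Ioo a b, b - t < δ ∧ (b - t) * g t < c := by
  by_contra hcon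
  push_neg at hcon
  set a' := max a (b - δ) with ha'
  have ha'b : a' < b := max_lt hab (by linarith)
  have haa' : a ≤ a' := le_max_left _ _
  have hbound : ∀ t ∈ Ioo a' b, c / (b - t) ≤ g t := by
    intro t ht
    have ht1 : t ∈ Ioo a b := ⟨lt_of_le_of_lt haa' ht.1, ht.2⟩
    have hbt : 0 < b - t := by linarith [ht.2]
    have ht2 : b - t < δ := by
      have := lt_of_le_of_lt (le_max_right a (b - δ)) ht.1; linarith
    have h3 := hcon t ht1 ht2
    rw [div_le_iff₀ hbt]
    nlinarith
  have hint2 : IntegrableOn (fun t : ℝ => (t - b)⁻¹) (Ioo a' b) := by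
    apply Integrable.mono' ((hg.mono_set (Ioo_subset_Ioo haa' le_rfl)).const_mul c⁻¹)
    · exact ((measurable_id.sub measurable_const).inv).aestronglyMeasurable
    · filter_upwards [ae_restrict_mem measurableSet_Ioo] with t ht
      have hbt : 0 < b - t := by linarith [ht.2]
      have h6 := mul_le_mul_of_nonneg_left (hbound t ht) (inv_nonneg.2 hc.le)
      have h7 : ‖(t - b)⁻¹‖ = (b - t)⁻¹ := by
        rw [Real.norm_eq_abs, abs_inv, abs_of_neg (by linarith : t - b < 0), neg_sub]
      rw [h7]
      calc (b - t)⁻¹ = c⁻¹ * (c / (b - t)) := by field_simp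
        _ ≤ c⁻¹ * g t := h6
  exact not_int_right ha'b hint2

private lemma exists_left {g : ℝ → ℝ} {a b : ℝ} (hab : a < b)
    (hg : IntegrableOn g (Ioo a b)) (c δ : ℝ) (hc : 0 < c) (hδ : 0 < δ) :
    ∃ t ∈ Ioo a b, t - a < δ ∧ (t - a) * g t < c := by
  by_contra hcon
  push_neg at hcon
  set b' := min b (a + δ) with hb'
  have hab' : a < b' := lt_min hab (by linarith)
  have hbb' : b' ≤ b := min_le_left _ _
  have hbound : ∀ t ∈ Ioo a b', c / (t - a) ≤ g t := by
    intro t ht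
    have ht1 : t ∈ Ioo a b := ⟨ht.1, lt_of_lt_of_le ht.2 hbb'⟩
    have hta : 0 < t - a := by linarith [ht.1]
    have ht2 : t - a < δ := by
      have := lt_of_lt_of_le ht.2 (min_le_right b (a + δ)); linarith
    have h3 := hcon t ht1 ht2
    rw [div_le_iff₀ hta]
    nlinarith
  have hint2 : IntegrableOn (fun t : ℝ => (t - a)⁻¹) (Ioo a b') := by
    apply Integrable.mono' ((hg.mono_set (Ioo_subset_Ioo le_rfl hbb')).const_mul c⁻¹)
    · exact ((measurable_id.sub measurable_const).inv).aestronglyMeasurable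
    · filter_upwards [ae_restrict_mem measurableSet_Ioo] with t ht
      have hta : 0 < t - a := by linarith [ht.1]
      have h6 := mul_le_mul_of_nonneg_left (hbound t ht) (inv_nonneg.2 hc.le)
      have h7 : ‖(t - a)⁻¹‖ = (t - a)⁻¹ := by
        rw [Real.norm_eq_abs, abs_of_pos (by positivity)]
      rw [h7]
      calc (t - a)⁻¹ = c⁻¹ * (c / (t - a)) := by field_simp
        _ ≤ c⁻¹ * g t := h6
  exact not_int_left hab' hint2

private lemma sq_le_of_forall_lam {x A q : ℝ} (hx : 0 ≤ x) (hA : 0 ≤ A) (hq : 0 < q)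
    (h : ∀ l : ℝ, 0 < l → x ≤ l * q / 2 + A / (2 * l)) : x ^ 2 ≤ A * q := by
  rcases eq_or_lt_of_le hx with h0 | h0
  · rw [← h0]; simpa using mul_nonneg hA hq.le
  · have hx2 := h (x / q) (by positivity)
    have e1 : x / q * q = x := div_mul_cancel₀ x hq.ne'
    have e2 : A / (2 * (x / q)) = A * q / (2 * x) := by
      rw [div_eq_div_iff (by positivity) (by positivity)]; field_simp
    rw [e1, e2] at hx2
    have e3 : A * q / (2 * x) * (2 * x) = A * q := div_mul_cancel₀ _ (by positivity)
    nlinarith [mul_le_mul_of_nonneg_right hx2 (by positivity : (0:ℝ) ≤ 2 * x)]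

theorem stmt2 (α : ℝ) (hα : 0 < α) (n : ℤ) (hn : 1 ≤ |n|) (κ R : ℝ) (hR : 0 < R)
    (u : ℝ → ℝ) (hu : IsVortexSol α n κ R u) (hE : FiniteEnergy α R u) :
    IntegrableOn (fun r => r * (deriv u r) ^ 2) (Ioo 0 R) ∧
    IntegrableOn (fun r => ((n : ℝ) ^ 2 / r) * (u r) ^ 2) (Ioo 0 R) ∧
    IntegrableOn (fun r => r * (u r) ^ 2) (Ioo 0 R) ∧
    IntegrableOn (fun r => r * (u r) ^ 4 / (1 + α * (u r) ^ 2)) (Ioo 0 R) ∧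
    -(∫ r in Ioo (0 : ℝ) R, r * (deriv u r) ^ 2)
      = ∫ r in Ioo (0 : ℝ) R,
          (((n : ℝ) ^ 2 / r) * (u r) ^ 2 + 2 * κ * r * (u r) ^ 2
            - 2 * r * (u r) ^ 4 / (1 + α * (u r) ^ 2)) := by
  obtain ⟨hcont, hdiff, hu0, huR, hode⟩ := hu
  have mder : Measurable (deriv u) := measurable_deriv u
  have mu : AEStronglyMeasurable u (volume.restrict (Ioo 0 R)) :=
    (hcont.mono Ioo_subset_Icc_self).aestronglyMeasurable measurableSet_Ioo
  set g : ℝ → ℝ := fun r => r * deriv u r ^ 2 + u r ^ 2 / r with hgdef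
  have hgval : ∀ r, g r = r * deriv u r ^ 2 + u r ^ 2 / r := fun r => rfl
  have hgnn : ∀ r ∈ Ioo (0:ℝ) R, 0 ≤ g r := fun r hr =>
    add_nonneg (mul_nonneg hr.1.le (sq_nonneg _)) (div_nonneg (sq_nonneg _) hr.1.le)
  have mg1 : AEStronglyMeasurable (fun r => r * deriv u r ^ 2) (volume.restrict (Ioo 0 R)) :=
    (measurable_id.mul (mder.pow_const 2)).aestronglyMeasurable
  have mq : AEStronglyMeasurable (fun r => u r ^ 2 / r) (volume.restrict (Ioo 0 R)) :=
    ((mu.aemeasurable.pow_const 2).div aemeasurable_id).aestronglyMeasurable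
  have mgm : AEStronglyMeasurable g (volume.restrict (Ioo 0 R)) := mg1.add mq
  have hg : IntegrableOn g (Ioo 0 R) := by
    apply Integrable.mono' hE mgm
    filter_upwards [ae_restrict_mem measurableSet_Ioo] with r hr
    rw [Real.norm_eq_abs, abs_of_nonneg (hgnn r hr), hgval r]
    have hlog : 0 ≤ r * Real.log (1 + α * u r ^ 2) :=
      mul_nonneg hr.1.le (Real.log_nonneg (by nlinarith [sq_nonneg (u r), hα.le]))
    linarith
  have h1 : IntegrableOn (fun r => r * deriv u r ^ 2) (Ioo 0 R) := by
    apply Integrable.mono' hg mg1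
    filter_upwards [ae_restrict_mem measurableSet_Ioo] with r hr
    rw [Real.norm_eq_abs, abs_of_nonneg (mul_nonneg hr.1.le (sq_nonneg _)), hgval r]
    have : 0 ≤ u r ^ 2 / r := div_nonneg (sq_nonneg _) hr.1.le
    linarith
  have hquot : IntegrableOn (fun r => u r ^ 2 / r) (Ioo 0 R) := by
    apply Integrable.mono' hg mq
    filter_upwards [ae_restrict_mem measurableSet_Ioo] with r hr
    rw [Real.norm_eq_abs, abs_of_nonneg (div_nonneg (sq_nonneg _) hr.1.le), hgval r]
    have : (0:ℝ) ≤ r * deriv u r ^ 2 := mul_nonneg hr.1.le (sq_nonneg _)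
    linarith
  have h2 : IntegrableOn (fun r => ((n : ℝ) ^ 2 / r) * u r ^ 2) (Ioo 0 R) :=
    (hquot.const_mul ((n:ℝ)^2)).congr (ae_of_all _ fun r => by ring)
  have h3 : IntegrableOn (fun r => r * u r ^ 2) (Ioo 0 R) :=
    ((continuousOn_id.mul (hcont.pow 2)).integrableOn_Icc).mono_set Ioo_subset_Icc_self
  have hden : ∀ r ∈ Icc (0:ℝ) R, (1 + α * u r ^ 2) ≠ 0 := fun r _ => by
    nlinarith [sq_nonneg (u r), mul_nonneg hα.le (sq_nonneg (u r))]
  have h4 : IntegrableOn (fun r => r * u r ^ 4 / (1 + α * u r ^ 2)) (Ioo 0 R) :=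
    (((continuousOn_id.mul (hcont.pow 4)).div
      (continuousOn_const.add (continuousOn_const.mul (hcont.pow 2))) hden).integrableOn_Icc).mono_set
      Ioo_subset_Icc_self
  have h3' : IntegrableOn (fun r => 2 * κ * r * u r ^ 2) (Ioo 0 R) :=
    (h3.const_mul (2 * κ)).congr (ae_of_all _ fun r => by ring)
  have h4' : IntegrableOn (fun r => 2 * r * u r ^ 4 / (1 + α * u r ^ 2)) (Ioo 0 R) :=
    (h4.const_mul 2).congr (ae_of_all _ fun r => by ring)
  set G : ℝ → ℝ := fun r => ((n : ℝ) ^ 2 / r) * u r ^ 2 + 2 * κ * r * u r ^ 2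
      - 2 * r * u r ^ 4 / (1 + α * u r ^ 2) with hGdef
  have hG : IntegrableOn G (Ioo 0 R) := (h2.add h3').sub h4'
  set H : ℝ → ℝ := fun r => r * deriv u r ^ 2 + G r with hHdef
  have hH : IntegrableOn H (Ioo 0 R) := h1.add hG
  refine ⟨h1, h2, h3, h4, ?_⟩
  have hz : ∫ r in Ioo (0:ℝ) R, H r = 0 := by
    set B : ℝ → ℝ := fun r => r * deriv u r * u r with hBdef
    have hBval : ∀ r, B r = r * deriv u r * u r := fun r => rfl
    -- Fundamental identity on compact subintervals
    have key : ∀ s t : ℝ, s ∈ Ioo (0:ℝ) R → t ∈ Ioo (0:ℝ) R → s ≤ t →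
        ∫ r in Ioo s t, H r = B t - B s := by
      intro s t hs ht hst
      have hsub : Icc s t ⊆ Ioo 0 R := fun x hx =>
        ⟨lt_of_lt_of_le hs.1 hx.1, lt_of_le_of_lt hx.2 ht.2⟩
      have hsub' : Ioo s t ⊆ Ioo 0 R := fun x hx => hsub ⟨hx.1.le, hx.2.le⟩
      have hHint : IntervalIntegrable H volume s t :=
        (intervalIntegrable_iff_integrableOn_Ioo_of_le hst).2 (hH.mono_set hsub')
      have hder : ∀ x ∈ uIcc s t, HasDerivAt B (H x) x := by
        intro x hx
        rw [uIcc_of_le hst] at hx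
        have hx' : x ∈ Ioo (0:ℝ) R := hsub hx
        obtain ⟨hd1, hd2⟩ := hdiff x hx'
        have hw : HasDerivAt (fun r => r * deriv u r) (deriv (fun r => r * deriv u r) x) x :=
          (differentiableAt_id.mul hd2).hasDerivAt
        have hB : HasDerivAt B
            (deriv (fun r => r * deriv u r) x * u x + x * deriv u x * deriv u x) x := by
          have h21 := hw.mul hd1.hasDerivAt
          rw [hBdef]
          exact h21
        have hHx : H x = x * deriv u x ^ 2 + (((n:ℝ)^2/x) * u x ^ 2 + 2*κ*x*u x ^ 2
            - 2*x*u x ^ 4/(1 + α * u x ^ 2)) := rfl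
        have heq := hode x hx'
        have hcalc : x * deriv u x ^ 2 + (((n:ℝ)^2/x) * u x ^ 2 + 2*κ*x*u x ^ 2
            - 2*x*u x ^ 4/(1 + α * u x ^ 2))
            = deriv (fun r => r * deriv u r) x * u x + x * deriv u x * deriv u x := by
          linear_combination (-(u x)) * heq
        rw [hHx, hcalc]
        exact hB
      calc ∫ r in Ioo s t, H r = ∫ r in s..t, H r := by
            rw [intervalIntegral.integral_of_le hst, integral_Ioc_eq_integral_Ioo]
        _ = B t - B s := intervalIntegral.integral_eq_sub_of_hasDerivAt hder hHint
    -- tail energy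
    set eps : ℝ → ℝ := fun t => ∫ r in Ioo t R, g r with hepsdef
    have hepsval : ∀ t, eps t = ∫ r in Ioo t R, g r := fun t => rfl
    have hepsnn : ∀ t ∈ Ioo (0:ℝ) R, 0 ≤ eps t := by
      intro t ht
      apply setIntegral_nonneg measurableSet_Ioo
      intro x hx
      exact hgnn x ⟨lt_trans ht.1 hx.1, hx.2⟩
    -- sequences
    have hsex : ∀ k : ℕ, ∃ s ∈ Ioo (0:ℝ) R,
        s - 0 < 1/((k:ℝ)+1) ∧ (s - 0) * g s < 1/((k:ℝ)+1) := fun k =>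
      exists_left hR hg (1/((k:ℝ)+1)) (1/((k:ℝ)+1)) (by positivity) (by positivity)
    choose sf hsf1 hsf2 hsf3 using hsex
    have htex : ∀ k : ℕ, ∃ t ∈ Ioo (0:ℝ) R, R - t < 1/((k:ℝ)+1) ∧ (R - t) * g t < 1 := fun k =>
      exists_right hR hg 1 (1/((k:ℝ)+1)) one_pos (by positivity)
    choose tf htf1 htf2 htf3 using htex
    have hone : Tendsto (fun k : ℕ => 1/((k:ℝ)+1)) atTop (𝓝 0) :=
      tendsto_one_div_add_atTop_nhds_zero_nat
    have hsf0 : Tendsto sf atTop (𝓝 0) := by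
      apply squeeze_zero (fun k => (hsf1 k).1.le) (fun k => ?_) hone
      have h22 := hsf2 k; linarith
    have htf0 : Tendsto tf atTop (𝓝 R) := by
      have hlow : ∀ k : ℕ, R - 1/((k:ℝ)+1) ≤ tf k := fun k => by linarith [htf2 k]
      have hup : ∀ k : ℕ, tf k ≤ R := fun k => (htf1 k).2.le
      have h23 : Tendsto (fun k : ℕ => R - 1/((k:ℝ)+1)) atTop (𝓝 (R - 0)) :=
        tendsto_const_nhds.sub hone
      rw [sub_zero] at h23
      exact tendsto_of_tendsto_of_tendsto_of_le_of_le h23 tendsto_const_nhds hlow hup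
    -- boundary term vanishes at 0
    have hBs : ∀ k, |B (sf k)| ≤ 1/((k:ℝ)+1) := by
      intro k
      have hs := hsf1 k
      have h5 : |B (sf k)| ≤ (sf k) * g (sf k) := by
        have e : (sf k) * g (sf k) = (sf k)^2 * deriv u (sf k)^2 + u (sf k)^2 := by
          have h0 : sf k ≠ 0 := ne_of_gt hs.1
          rw [hgval]; field_simp
        rw [hBval, e, abs_le]
        constructor <;>
          nlinarith [sq_nonneg (sf k * deriv u (sf k) - u (sf k)),
            sq_nonneg (sf k * deriv u (sf k) + u (sf k))]
      calc |B (sf k)| ≤ sf k * g (sf k) := h5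
        _ = (sf k - 0) * g (sf k) := by ring
        _ ≤ 1/((k:ℝ)+1) := (hsf3 k).le
    have hBs0 : Tendsto (fun k => B (sf k)) atTop (𝓝 0) :=
      squeeze_zero_norm (fun k => by simpa [Real.norm_eq_abs] using hBs k) hone
    -- boundary term vanishes at R
    have hBt2 : ∀ k, B (tf k)^2 ≤ eps (tf k) := by
      intro k
      have ht := htf1 k
      have ht0 : (0:ℝ) < tf k := ht.1
      have htR : tf k < R := ht.2
      set t := tf k with htdef
      have hsubt : Ioo t R ⊆ Ioo 0 R := Ioo_subset_Ioo ht0.le le_rfl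
      have hg' : IntegrableOn g (Ioo t R) := hg.mono_set hsubt
      have h1' : IntegrableOn (fun r => r * deriv u r ^ 2) (Ioo t R) := h1.mono_set hsubt
      have hsq : ∀ r ∈ Ioo t R, deriv u r ^ 2 ≤ t⁻¹ * (r * deriv u r ^ 2) := by
        intro r hr
        have h9 : 1 ≤ t⁻¹ * r := by
          rw [inv_mul_eq_div, le_div_iff₀ ht0]; linarith [hr.1]
        nlinarith [sq_nonneg (deriv u r)]
      have hd1' : IntegrableOn (fun r => deriv u r) (Ioo t R) := by
        apply Integrable.mono' ((integrable_const 1).add (h1'.const_mul t⁻¹))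
          mder.aestronglyMeasurable
        filter_upwards [ae_restrict_mem measurableSet_Ioo] with r hr
        have h10 : |deriv u r| ≤ 1 + deriv u r ^ 2 := by
          nlinarith [sq_nonneg (|deriv u r| - 1), sq_abs (deriv u r), abs_nonneg (deriv u r)]
        have h8 := hsq r hr
        rw [Real.norm_eq_abs]
        simp only [Pi.add_apply]
        linarith
      have hftc : ∫ r in t..R, deriv u r = u R - u t := by
        apply intervalIntegral.integral_eq_sub_of_hasDerivAt_of_le htR.le
        · exact hcont.mono (Icc_subset_Icc ht0.le le_rfl)
        · intro x hx
          exact (hdiff x ⟨lt_trans ht0 hx.1, hx.2⟩).1.hasDerivAt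
        · exact (intervalIntegrable_iff_integrableOn_Ioo_of_le htR.le).2 hd1'
      have hvol : (volume (Ioo t R)).toReal = R - t := by
        rw [Real.volume_Ioo, ENNReal.toReal_ofReal (by linarith)]
      have hrint : (∫ r in Ioo t R, r * deriv u r ^ 2) ≤ eps t := by
        rw [hepsval t]
        apply setIntegral_mono_on h1' hg' measurableSet_Ioo
        intro x hx
        rw [hgval x]
        exact le_add_of_nonneg_right (div_nonneg (sq_nonneg _) (lt_trans ht0 hx.1).le)
      have hlam : ∀ l : ℝ, 0 < l → |u t| ≤ l * (R - t)/2 + (eps t / t)/(2*l) := by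
        intro l hl
        have h2l : (0:ℝ) < 2*l := by linarith
        have h11 : ∫ r in Ioo t R, deriv u r = - u t := by
          have h25 : ∫ r in t..R, deriv u r = ∫ r in Ioo t R, deriv u r := by
            rw [intervalIntegral.integral_of_le htR.le, integral_Ioc_eq_integral_Ioo]
          rw [← h25, hftc, huR, zero_sub]
        have hIl2 : Integrable (fun r => (2*l)⁻¹ * (t⁻¹ * (r * deriv u r ^ 2)))
            (volume.restrict (Ioo t R)) := (h1'.const_mul t⁻¹).const_mul (2*l)⁻¹
        have hIl : Integrable (fun r => l/2 + (2*l)⁻¹ * (t⁻¹ * (r * deriv u r ^ 2)))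
            (volume.restrict (Ioo t R)) := (integrable_const (l/2)).add hIl2
        have h12 : (∫ r in Ioo t R, ‖deriv u r‖)
            ≤ ∫ r in Ioo t R, (l/2 + (2*l)⁻¹ * (t⁻¹ * (r * deriv u r ^ 2))) := by
          apply integral_mono_of_nonneg (ae_of_all _ fun r => norm_nonneg _) hIl
          filter_upwards [ae_restrict_mem measurableSet_Ioo] with r hr
          have h9 := hsq r hr
          have h13 : |deriv u r| ≤ l/2 + (2*l)⁻¹ * deriv u r ^ 2 := by
            rw [inv_mul_eq_div, ← sub_le_iff_le_add', le_div_iff₀ h2l]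
            nlinarith [sq_nonneg (l - |deriv u r|), sq_abs (deriv u r)]
          have h26 := mul_le_mul_of_nonneg_left h9 (inv_nonneg.2 h2l.le)
          rw [Real.norm_eq_abs]
          linarith
        have h14 : (∫ r in Ioo t R, (l/2 + (2*l)⁻¹ * (t⁻¹ * (r * deriv u r ^ 2))))
            = l/2 * (R - t) + (2*l)⁻¹ * (t⁻¹ * ∫ r in Ioo t R, r * deriv u r ^ 2) := by
          rw [integral_add (integrable_const _) hIl2, setIntegral_const, smul_eq_mul,
            integral_const_mul, integral_const_mul, measureReal_def, hvol]
          ring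
        have h20 : (2*l)⁻¹ * (t⁻¹ * ∫ r in Ioo t R, r * deriv u r ^ 2)
            ≤ (eps t / t)/(2*l) := by
          have h27 : (2*l)⁻¹ * (t⁻¹ * ∫ r in Ioo t R, r * deriv u r ^ 2)
              = ((∫ r in Ioo t R, r * deriv u r ^ 2) / t)/(2*l) := by
            rw [div_div, div_eq_mul_inv, mul_inv]
            ring
          rw [h27]
          exact div_le_div_of_nonneg_right (div_le_div_of_nonneg_right hrint ht0.le) h2l.le
        calc |u t| = |∫ r in Ioo t R, deriv u r| := by rw [h11, abs_neg]
          _ ≤ ∫ r in Ioo t R, ‖deriv u r‖ := by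
              simpa [Real.norm_eq_abs] using
                norm_integral_le_integral_norm (μ := volume.restrict (Ioo t R))
                  (fun r => deriv u r)
          _ ≤ _ := h12
          _ = _ := h14
          _ ≤ l * (R - t)/2 + (eps t / t)/(2*l) := by
            have : l/2 * (R - t) = l * (R - t)/2 := by ring
            rw [this]
            linarith [h20]
      have hA : 0 ≤ eps t / t := div_nonneg (hepsnn t ht) ht0.le
      have hq : 0 < R - t := by linarith
      have hu2 : u t ^ 2 ≤ (eps t / t) * (R - t) := by
        have h28 := sq_le_of_forall_lam (abs_nonneg (u t)) hA hq hlam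
        calc u t ^ 2 = |u t| ^ 2 := (sq_abs _).symm
          _ ≤ (eps t / t) * (R - t) := h28
      have hA1 : t * deriv u t ^ 2 ≤ g t := by
        rw [hgval t]
        exact le_add_of_nonneg_right (div_nonneg (sq_nonneg _) ht0.le)
      have hA2 : t * u t ^ 2 ≤ eps t * (R - t) := by
        have h15 := mul_le_mul_of_nonneg_left hu2 ht0.le
        calc t * u t ^ 2 ≤ t * ((eps t / t) * (R - t)) := h15
          _ = eps t * (R - t) := by field_simp
      have e1 : B t ^ 2 = (t * deriv u t ^ 2) * (t * u t ^ 2) := by rw [hBval t]; ring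
      have hg0 : 0 ≤ g t := hgnn t ht
      have e2 : (t * deriv u t ^ 2) * (t * u t ^ 2) ≤ g t * (eps t * (R - t)) :=
        mul_le_mul hA1 hA2 (mul_nonneg ht0.le (sq_nonneg _)) hg0
      have htg : (R - t) * g t ≤ 1 := (htf3 k).le
      have heps0 : 0 ≤ eps t := hepsnn t ht
      calc B t ^ 2 = (t * deriv u t ^ 2) * (t * u t ^ 2) := e1
        _ ≤ g t * (eps t * (R - t)) := e2
        _ = eps t * ((R - t) * g t) := by ring
        _ ≤ eps t * 1 := mul_le_mul_of_nonneg_left htg heps0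
        _ = eps t := mul_one _
    have heps_t : Tendsto (fun k => eps (tf k)) atTop (𝓝 0) := by
      have h16 : ∀ k, eps (tf k) = ∫ x in Ioo (0:ℝ) R, (Ioo (tf k) R).indicator g x := by
        intro k
        rw [hepsval, setIntegral_indicator measurableSet_Ioo,
          inter_eq_self_of_subset_right (Ioo_subset_Ioo (htf1 k).1.le le_rfl)]
      have hdct := tendsto_integral_filter_of_dominated_convergence
        (μ := volume.restrict (Ioo (0:ℝ) R)) (l := (atTop : Filter ℕ))
        (F := fun k => (Ioo (tf k) R).indicator g)
        (f := fun _ => (0:ℝ)) (fun x => |g x|)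
        (Eventually.of_forall fun k => mgm.indicator measurableSet_Ioo)
        (Eventually.of_forall fun k => ae_of_all _ fun x => by
          simpa [Real.norm_eq_abs] using norm_indicator_le_norm_self g x (s := Ioo (tf k) R))
        hg.abs ?_
      · simp only [integral_zero] at hdct
        exact Tendsto.congr (fun k => (h16 k).symm) hdct
      · filter_upwards [ae_restrict_mem measurableSet_Ioo] with x hx
        have h19 : ∀ᶠ k in atTop, x < tf k := htf0.eventually (eventually_gt_nhds hx.2)
        apply tendsto_const_nhds.congr'
        filter_upwards [h19] with k hk
        exact (indicator_of_notMem (fun hmem => absurd hmem.1 (not_lt.2 hk.le)) g).symm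
    have hBt0 : Tendsto (fun k => B (tf k)) atTop (𝓝 0) := by
      apply squeeze_zero_norm (fun k => ?_)
        ((Real.continuous_sqrt.tendsto' 0 0 Real.sqrt_zero).comp heps_t)
      simpa [Real.norm_eq_abs] using Real.abs_le_sqrt (hBt2 k)
    -- limits of the interval integrals
    have lim1 : Tendsto (fun k => ∫ r in Ioo (sf k) (tf k), H r) atTop
        (𝓝 (∫ r in Ioo (0:ℝ) R, H r)) := by
      have h17 : ∀ k, (∫ r in Ioo (sf k) (tf k), H r)
          = ∫ x in Ioo (0:ℝ) R, (Ioo (sf k) (tf k)).indicator H x := by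
        intro k
        rw [setIntegral_indicator measurableSet_Ioo,
          inter_eq_self_of_subset_right (Ioo_subset_Ioo (hsf1 k).1.le (htf1 k).2.le)]
      have hdct := tendsto_integral_filter_of_dominated_convergence
        (μ := volume.restrict (Ioo (0:ℝ) R)) (l := (atTop : Filter ℕ))
        (F := fun k => (Ioo (sf k) (tf k)).indicator H)
        (f := H) (fun x => |H x|)
        (Eventually.of_forall fun k => hH.aestronglyMeasurable.indicator measurableSet_Ioo)
        (Eventually.of_forall fun k => ae_of_all _ fun x => by
          simpa [Real.norm_eq_abs] using norm_indicator_le_norm_self H x (s := Ioo (sf k) (tf k)))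
        hH.abs ?_
      · exact Tendsto.congr (fun k => (h17 k).symm) hdct
      · filter_upwards [ae_restrict_mem measurableSet_Ioo] with x hx
        have h18 : ∀ᶠ k in atTop, sf k < x := hsf0.eventually (eventually_lt_nhds hx.1)
        have h19 : ∀ᶠ k in atTop, x < tf k := htf0.eventually (eventually_gt_nhds hx.2)
        apply tendsto_const_nhds.congr'
        filter_upwards [h18, h19] with k hk1 hk2
        exact (indicator_of_mem (show x ∈ Ioo (sf k) (tf k) from ⟨hk1, hk2⟩) H).symm
    have lim2 : Tendsto (fun k => ∫ r in Ioo (sf k) (tf k), H r) atTop (𝓝 0) := by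
      have hev : ∀ᶠ k in atTop, sf k ≤ tf k := by
        filter_upwards [hsf0.eventually (eventually_lt_nhds (half_pos hR)),
          htf0.eventually (eventually_gt_nhds (half_lt_self hR))] with k hk1 hk2
        linarith
      have h29 : Tendsto (fun k => B (tf k) - B (sf k)) atTop (𝓝 0) := by
        simpa using hBt0.sub hBs0
      apply h29.congr'
      filter_upwards [hev] with k hk
      exact (key (sf k) (tf k) (hsf1 k) (htf1 k) hk).symm
    exact tendsto_nhds_unique lim1 lim2
  have hsplit : ∫ r in Ioo (0:ℝ) R, H r
      = (∫ r in Ioo (0:ℝ) R, r * deriv u r ^ 2) + ∫ r in Ioo (0:ℝ) R, G r :=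
    integral_add h1 hG
  have : -(∫ r in Ioo (0:ℝ) R, r * (deriv u r) ^ 2) = ∫ r in Ioo (0:ℝ) R, G r := by
    linarith [hsplit, hz]
  simpa [hGdef] using this
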